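/- Let K be a field with an absolute value |·| and let t ∈ (0,1]. If A is a K-algebra and ‖·‖ is a multiplicative seminorm on A whose restriction to K equals |·|^t, then ‖·‖^{1/t} is also a multiplicative seminorm on A (in particular it satisfies the triangle inequality) whose restriction to K equals |·|. -/

import Mathlib

open Finset Filter

/-- A multiplicative seminorm on a commutative ring: `f 0 = 0`, `f 1 = 1`,
multiplicativity, triangle inequality, and nonnegativity. -/
def IsMultSeminorm {A : Type*} [CommRing A] (f : A → ℝ) : Prop :=
  f 0 = 0 ∧ f 1 = 1 ∧ (∀ x y, f (x * y) = f x * f y) ∧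
    (∀ x y, f (x + y) ≤ f x + f y) ∧ ∀ x, 0 ≤ f x

private lemma sum_le_of_sub {A : Type*} [CommRing A] (f : A → ℝ)
    (h0 : f 0 = 0) (hadd : ∀ x y, f (x + y) ≤ f x + f y)
    {ι : Type*} (s : Finset ι) (g : ι → A) :
    f (∑ i ∈ s, g i) ≤ ∑ i ∈ s, f (g i) := by
  classical
  induction s using Finset.induction with
  | empty => simp [h0]
  | insert _ _ hx ih =>
    rw [Finset.sum_insert hx, Finset.sum_insert hx]
    exact le_trans (hadd _ _) (by linarith)

private lemma pow_le_of_forall {S T : ℝ} (hS : 0 ≤ S) (hT : 0 ≤ T) (m : ℕ)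
    (h : ∀ n : ℕ, S ^ n ≤ ((n : ℝ) + 1) ^ m * T ^ n) : S ≤ T := by
  by_contra hlt
  push_neg at hlt
  have hS0 : 0 < S := lt_of_le_of_lt hT hlt
  set r := T / S with hr
  have hr0 : 0 ≤ r := div_nonneg hT hS0.le
  have hr1 : r < 1 := (div_lt_one hS0).mpr hlt
  have key : ∀ n : ℕ, (1 : ℝ) ≤ ((n : ℝ) + 1) ^ m * r ^ n := by
    intro n
    have := h n
    have hSn : 0 < S ^ n := pow_pos hS0 n
    have h1 : (1:ℝ) ≤ (((n : ℝ) + 1) ^ m * T ^ n) / S ^ n := (one_le_div hSn).mpr this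
    calc (1:ℝ) ≤ (((n : ℝ) + 1) ^ m * T ^ n) / S ^ n := h1
    _ = ((n : ℝ) + 1) ^ m * (T / S) ^ n := by rw [div_pow]; ring
  have htend : Tendsto (fun n : ℕ => ((n : ℝ) + 1) ^ m * r ^ n) atTop (nhds 0) := by
    have h1 := tendsto_pow_const_mul_const_pow_of_lt_one m hr0 hr1
    have h2 : Tendsto (fun n : ℕ => ((n : ℝ) + 1) ^ m * r ^ (n + 1)) atTop (nhds 0) := by
      have h4 := h1.comp (tendsto_add_atTop_nat 1)
      apply h4.congr
      intro n
      simp only [Function.comp]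
      push_cast
      ring_nf
    rcases eq_or_lt_of_le hr0 with h | h
    · have : ∀ n : ℕ, n ≥ 1 → ((n:ℝ)+1)^m * r^n = 0 := by
        intro n hn
        rw [← h, zero_pow (by omega : n ≠ 0), mul_zero]
      apply Tendsto.congr' _ tendsto_const_nhds
      filter_upwards [eventually_ge_atTop 1] with n hn
      exact (this n hn).symm
    · have h3 : Tendsto (fun n : ℕ => (((n : ℝ) + 1) ^ m * r ^ (n + 1)) / r) atTop (nhds (0 / r)) :=
        h2.div_const r
      rw [zero_div] at h3
      apply h3.congr
      intro n
      field_simp [h.ne']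
      ring
  have := (htend.eventually (eventually_lt_nhds (by norm_num : (0:ℝ) < 1))).exists
  obtain ⟨n, hn⟩ := this
  exact absurd (key n) (not_le.mpr hn)

private lemma abv_natCast_le {K : Type*} [Field K] (v : AbsoluteValue K ℝ) (n : ℕ) :
    v (n : K) ≤ (n : ℝ) := by
  induction n with
  | zero => simp
  | succ n ih =>
    push_cast
    calc v ((n : K) + 1) ≤ v (n : K) + v 1 := v.add_le _ _
    _ ≤ (n : ℝ) + 1 := by rw [v.map_one]; linarith

private lemma key_triangle {K A : Type*} [Field K] [CommRing A] [Algebra K A]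
    (v : AbsoluteValue K ℝ) (t : ℝ) (ht0 : 0 < t) (ht1 : t ≤ 1)
    (f : A → ℝ) (hf : IsMultSeminorm f)
    (hres : ∀ c : K, f (algebraMap K A c) = v c ^ t) (x y : A) :
    f (x + y) ^ (1 / t) ≤ f x ^ (1 / t) + f y ^ (1 / t) := by
  obtain ⟨h0, h1, hmul, hadd, hnn⟩ := hf
  have hpow : ∀ (z : A) (n : ℕ), f (z ^ n) = f z ^ n := by
    intro z n
    induction n with
    | zero => simpa using h1
    | succ n ih => rw [pow_succ, pow_succ, hmul, ih]
  set a := f x with ha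
  set b := f y with hb
  set s := f (x + y) with hs
  have hsnn : 0 ≤ s := hnn _
  set A' := a ^ (1 / t) with hA'
  set B' := b ^ (1 / t) with hB'
  set T := A' + B' with hT
  have hA'nn : 0 ≤ A' := Real.rpow_nonneg (hnn x) _
  have hB'nn : 0 ≤ B' := Real.rpow_nonneg (hnn y) _
  have hTnn : 0 ≤ T := add_nonneg hA'nn hB'nn
  have haA : a = A' ^ t := by
    rw [hA', ← Real.rpow_mul (hnn x), one_div_mul_cancel ht0.ne', Real.rpow_one]
  have hbB : b = B' ^ t := by
    rw [hB', ← Real.rpow_mul (hnn y), one_div_mul_cancel ht0.ne', Real.rpow_one]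
  set m := ⌈1 / t⌉₊ with hm
  apply pow_le_of_forall (Real.rpow_nonneg hsnn _) hTnn m
  intro n
  -- first: s^n ≤ (n+1) * (T^n)^t
  have step1 : s ^ n ≤ ((n : ℝ) + 1) * (T ^ n) ^ t := by
    have hexp : (x + y) ^ n = ∑ i ∈ Finset.range (n + 1),
        x ^ i * y ^ (n - i) * (n.choose i : A) := add_pow x y n
    have hle1 : s ^ n ≤ ∑ i ∈ Finset.range (n + 1),
        f (x ^ i * y ^ (n - i) * (n.choose i : A)) := by
      rw [hs, ← hpow, hexp]
      exact sum_le_of_sub f h0 hadd _ _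
    have hterm : ∀ i ∈ Finset.range (n + 1),
        f (x ^ i * y ^ (n - i) * (n.choose i : A)) ≤ (T ^ n) ^ t := by
      intro i hi
      have hC : f ((n.choose i : A)) ≤ ((n.choose i : ℝ)) ^ t := by
        rw [show ((n.choose i : A)) = algebraMap K A ((n.choose i : K)) by
          rw [map_natCast], hres]
        exact Real.rpow_le_rpow (v.nonneg _) (abv_natCast_le v _) ht0.le
      have hCnn : (0:ℝ) ≤ (n.choose i : ℝ) := Nat.cast_nonneg _
      have hub : (n.choose i : ℝ) * A' ^ i * B' ^ (n - i) ≤ T ^ n := by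
        have hbin : (A' + B') ^ n = ∑ j ∈ Finset.range (n + 1),
            A' ^ j * B' ^ (n - j) * (n.choose j : ℝ) := add_pow A' B' n
        rw [hT, hbin]
        have := Finset.single_le_sum (f := fun j => A' ^ j * B' ^ (n - j) * (n.choose j : ℝ))
          (fun j _ => by positivity) hi
        exact le_trans (le_of_eq (by ring)) this
      calc f (x ^ i * y ^ (n - i) * (n.choose i : A))
          = a ^ i * b ^ (n - i) * f ((n.choose i : A)) := by
            rw [hmul, hmul, hpow, hpow]
        _ ≤ a ^ i * b ^ (n - i) * (n.choose i : ℝ) ^ t := by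
            apply mul_le_mul_of_nonneg_left hC
              (by have h2 := hnn x; have h3 := hnn y; positivity)
        _ = ((n.choose i : ℝ) * A' ^ i * B' ^ (n - i)) ^ t := by
            rw [Real.mul_rpow (by positivity) (by positivity),
              Real.mul_rpow hCnn (by positivity),
              ← Real.rpow_natCast A' i, ← Real.rpow_natCast B' (n - i),
              ← Real.rpow_mul hA'nn, ← Real.rpow_mul hB'nn,
              haA, hbB, ← Real.rpow_natCast (A' ^ t) i, ← Real.rpow_natCast (B' ^ t) (n - i),
              ← Real.rpow_mul hA'nn, ← Real.rpow_mul hB'nn]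
            ring
        _ ≤ (T ^ n) ^ t := Real.rpow_le_rpow (by positivity) hub ht0.le
    calc s ^ n ≤ ∑ i ∈ Finset.range (n + 1),
        f (x ^ i * y ^ (n - i) * (n.choose i : A)) := hle1
      _ ≤ ∑ i ∈ Finset.range (n + 1), (T ^ n) ^ t :=
          Finset.sum_le_sum hterm
      _ = ((n : ℝ) + 1) * (T ^ n) ^ t := by
          rw [Finset.sum_const, Finset.card_range]; push_cast; ring
  -- raise to 1/t
  have step2 : (s ^ (1 / t)) ^ n ≤ ((n : ℝ) + 1) ^ (1 / t) * T ^ n := by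
    have hLHS : (s ^ (1 / t)) ^ n = (s ^ n) ^ (1 / t) := by
      rw [← Real.rpow_natCast (s ^ (1/t)) n, ← Real.rpow_mul hsnn,
        ← Real.rpow_natCast s n, ← Real.rpow_mul hsnn, mul_comm]
    rw [hLHS]
    calc (s ^ n) ^ (1 / t) ≤ (((n : ℝ) + 1) * (T ^ n) ^ t) ^ (1 / t) :=
        Real.rpow_le_rpow (by positivity) step1 (by positivity)
      _ = ((n : ℝ) + 1) ^ (1 / t) * T ^ n := by
        rw [Real.mul_rpow (by positivity) (by positivity),
          ← Real.rpow_mul (by positivity), mul_one_div_cancel ht0.ne', Real.rpow_one]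
  calc (s ^ (1 / t)) ^ n ≤ ((n : ℝ) + 1) ^ (1 / t) * T ^ n := step2
    _ ≤ ((n : ℝ) + 1) ^ m * T ^ n := by
      apply mul_le_mul_of_nonneg_right _ (by positivity)
      rw [← Real.rpow_natCast ((n:ℝ)+1) m]
      exact Real.rpow_le_rpow_of_exponent_le (by push_cast; linarith [Nat.cast_nonneg (α := ℝ) n])
        (Nat.le_ceil _)


/-- if `‖·‖` is a multiplicative seminorm on a `K`-algebra `A` restricting to
`|·|^t` on `K` for some `t ∈ (0,1]`, then `‖·‖^{1/t}` is a multiplicative seminorm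
restricting to `|·|` on `K`. -/
theorem stmt_0 {K A : Type*} [Field K] [CommRing A] [Algebra K A]
    (v : AbsoluteValue K ℝ) (t : ℝ) (ht0 : 0 < t) (ht1 : t ≤ 1)
    (f : A → ℝ) (hf : IsMultSeminorm f)
    (hres : ∀ c : K, f (algebraMap K A c) = v c ^ t) :
    IsMultSeminorm (fun a => f a ^ (1 / t)) ∧
      ∀ c : K, f (algebraMap K A c) ^ (1 / t) = v c := by
  obtain ⟨h0, h1, hmul, hadd, hnn⟩ := hf
  constructor
  · refine ⟨?_, ?_, ?_, ?_, ?_⟩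
    · show f 0 ^ (1 / t) = 0
      rw [h0]
      exact Real.zero_rpow (by positivity)
    · show f 1 ^ (1 / t) = 1
      rw [h1]
      exact Real.one_rpow _
    · intro x y
      simp only
      rw [hmul, Real.mul_rpow (hnn x) (hnn y)]
    · intro x y
      exact key_triangle v t ht0 ht1 f ⟨h0, h1, hmul, hadd, hnn⟩ hres x y
    · intro x
      exact Real.rpow_nonneg (hnn x) _
  · intro c
    rw [hres c, ← Real.rpow_mul (v.nonneg c), mul_one_div_cancel ht0.ne', Real.rpow_one]
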